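/- Let u and ũ be real-valued processes with |u_t - ũ_t| ≤ C for all t ≥ 0 a.s., and let T̃ = inf{t ≥ 0 : ũ_t ∉ (-Ã, B̃)}. Suppose (e^{u_t}) is the likelihood-ratio martingale of P₁ with respect to P₀, i.e., for any stopping time S with appropriate optional sampling, P₁(E) = E₀[e^{u_S} 1_E] for E in the stopped σ-algebra. Then P₁(ũ_{T̃} ≤ -Ã) ≤ e^{-Ã + C} and P₀(ũ_{T̃} ≥ B̃) ≤ e^{-B̃ + C}. -/

import Mathlib

open Real MeasureTheory Set

private lemma aux_bound {Ω : Type*} [MeasurableSpace Ω]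
    (μ : Measure Ω) [IsProbabilityMeasure μ] (f : Ω → ℝ)
    (hf : Integrable f μ) (hfpos : ∀ ω, 0 < f ω) (hint : ∫ ω, f ω ∂μ = 1)
    (E : Set Ω) (c : ℝ) (hc : 0 < c) (hE : ∀ᵐ ω ∂μ, ω ∈ E → c ≤ f ω) :
    (μ E).toReal ≤ c⁻¹ := by
  set g : Ω → ℝ := hf.1.mk f with hg
  have hgm : StronglyMeasurable g := hf.1.stronglyMeasurable_mk
  have hfg : f =ᵐ[μ] g := hf.1.ae_eq_mk
  have hgint : Integrable g μ := hf.congr hfg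
  set F : Set Ω := {ω | c ≤ g ω} with hF
  have hFm : MeasurableSet F := hgm.measurable measurableSet_Ici
  have hEF : μ E ≤ μ F := by
    apply measure_mono_ae
    filter_upwards [hE, hfg] with ω h1 h2 h3
    show c ≤ g ω
    rw [← h2]; exact h1 h3
  have h1 : c * (μ F).toReal ≤ ∫ ω in F, g ω ∂μ := by
    apply setIntegral_ge_of_const_le_real hFm (measure_ne_top μ F)
    · exact fun x hx => hx
    · exact hgint.integrableOn
  have h2 : ∫ ω in F, g ω ∂μ ≤ ∫ ω, g ω ∂μ := by
    apply setIntegral_le_integral hgint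
    filter_upwards [hfg] with ω h
    rw [← h]; exact (hfpos ω).le
  have h3 : ∫ ω, g ω ∂μ = 1 := by
    rw [← integral_congr_ae hfg, hint]
  have hmain : c * (μ E).toReal ≤ 1 := by
    calc c * (μ E).toReal ≤ c * (μ F).toReal := by
          exact mul_le_mul_of_nonneg_left
            (ENNReal.toReal_mono (measure_ne_top μ F) hEF) hc.le
      _ ≤ 1 := h3 ▸ h1.trans h2
  rw [inv_eq_one_div, le_div_iff₀ hc]
  linarith

theorem dsprt_error_bounds {Ω : Type*} [MeasurableSpace Ω]
    (P0 P1 : Measure Ω) [IsProbabilityMeasure P0] [IsProbabilityMeasure P1]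
    (u utld : ℝ → Ω → ℝ) (C A B : ℝ) (hC : 0 ≤ C) (hA : 0 < A) (hB : 0 < B)
    (T : Ω → ℝ)
    (hT : ∀ ω, T ω = sInf {t : ℝ | 0 ≤ t ∧ utld t ω ∉ Ioo (-A) B})
    (hbound0 : ∀ᵐ ω ∂P0, ∀ t : ℝ, 0 ≤ t → |u t ω - utld t ω| ≤ C)
    (hbound1 : ∀ᵐ ω ∂P1, ∀ t : ℝ, 0 ≤ t → |u t ω - utld t ω| ≤ C)
    (hchange1 : ∀ E : Set Ω, MeasurableSet E →
      (P1 E).toReal = ∫ ω in E, exp (u (T ω) ω) ∂P0)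
    (hchange0 : ∀ E : Set Ω, MeasurableSet E →
      (P0 E).toReal = ∫ ω in E, exp (-(u (T ω) ω)) ∂P1) :
    (P1 {ω | utld (T ω) ω ≤ -A}).toReal ≤ exp (-A + C) ∧
    (P0 {ω | B ≤ utld (T ω) ω}).toReal ≤ exp (-B + C) := by
  have hT0 : ∀ ω, 0 ≤ T ω := by
    intro ω
    rw [hT ω]
    exact Real.sInf_nonneg (fun x hx => hx.1)
  -- integrals over univ equal 1
  have hint1 : ∫ ω, exp (-(u (T ω) ω)) ∂P1 = 1 := by
    have := hchange0 univ MeasurableSet.univ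
    rw [measure_univ] at this
    simpa using this.symm
  have hint0 : ∫ ω, exp (u (T ω) ω) ∂P0 = 1 := by
    have := hchange1 univ MeasurableSet.univ
    rw [measure_univ] at this
    simpa using this.symm
  have hI1 : Integrable (fun ω => exp (-(u (T ω) ω))) P1 := by
    by_contra h
    rw [integral_undef h] at hint1
    norm_num at hint1
  have hI0 : Integrable (fun ω => exp (u (T ω) ω)) P0 := by
    by_contra h
    rw [integral_undef h] at hint0
    norm_num at hint0
  constructor
  · have := aux_bound P1 (fun ω => exp (-(u (T ω) ω))) hI1
      (fun ω => exp_pos _) hint1 {ω | utld (T ω) ω ≤ -A} (exp (A - C))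
      (exp_pos _) ?_
    · rwa [← Real.exp_neg, neg_sub, sub_eq_neg_add] at this
    · filter_upwards [hbound1] with ω hb hω
      have h1 := hb (T ω) (hT0 ω)
      have h2 : u (T ω) ω ≤ -A + C := by
        have := abs_le.mp h1
        have hω' : utld (T ω) ω ≤ -A := hω
        linarith [this.2]
      exact exp_le_exp.mpr (by linarith)
  · have := aux_bound P0 (fun ω => exp (u (T ω) ω)) hI0
      (fun ω => exp_pos _) hint0 {ω | B ≤ utld (T ω) ω} (exp (B - C))
      (exp_pos _) ?_
    · rwa [← Real.exp_neg, neg_sub, sub_eq_neg_add] at this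
    · filter_upwards [hbound0] with ω hb hω
      have h1 := hb (T ω) (hT0 ω)
      have h2 : B - C ≤ u (T ω) ω := by
        have := abs_le.mp h1
        have hω' : B ≤ utld (T ω) ω := hω
        linarith [this.1]
      exact exp_le_exp.mpr h2
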